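/- For every k ≥ 1, if S is an infinite square-free sequence over 3 symbols, then the sequence S^+ = S^{(k+1)} over 3(k+1) symbols (each symbol t replaced by the block t^{(0)},...,t^{(k)}) is k-special; consequently π'(T_k) ≤ 3k + 3. -/

import Mathlib

/-- A repetition: a nonempty sequence whose first half equals its second half. -/
def IsRepetition {α : Type*} (l : List α) : Prop := ∃ w : List α, w ≠ [] ∧ l = w ++ w

/-- An edge-coloring is nonrepetitive if no path carries a repetitive color sequence. -/
def NonrepEdgeColoring {V α : Type*} (G : SimpleGraph V) (c : Sym2 V → α) : Prop :=
  ∀ u v : V, ∀ p : G.Walk u v, p.IsPath → ¬ IsRepetition (p.edges.map c)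

/-- The Thue chromatic index: minimum number of colors in a nonrepetitive edge-coloring. -/
noncomputable def thueIdx {V : Type*} (G : SimpleGraph V) : ℕ :=
  sInf {n | ∃ c : Sym2 V → ℕ, (∀ e ∈ G.edgeSet, c e < n) ∧ NonrepEdgeColoring G c}

/-- `i 1, …, i (2r)` (1-indexed) is a `k`-bad index sequence for the 1-indexed sequence `S`,
with turning index `m`: the symbols form a repetition, the indices strictly decrease up to
position `m` and then strictly increase, consecutive indices differ by at most `k`, and the
gap at the turn is strictly less than `k` when the turn is internal. -/
def KBadIdx {α : Type*} (k : ℕ) (S : ℕ → α) (r m : ℕ) (i : ℕ → ℕ) : Prop :=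
  1 ≤ r ∧ 1 < m ∧ m ≤ 2 * r ∧
  (∀ j, 1 ≤ j → j ≤ r → S (i j) = S (i (j + r))) ∧
  (∀ j, 1 ≤ j → j < m → i (j + 1) < i j) ∧
  (∀ j, m ≤ j → j < 2 * r → i j < i (j + 1)) ∧
  (∀ j, 1 ≤ j → j < 2 * r → i (j + 1) ≤ i j + k ∧ i j ≤ i (j + 1) + k) ∧
  (m < 2 * r → i (m + 1) < i m + k)

/-- A finite sequence `S` (1-indexed, of length `n`) is `k`-special if it admits no
`k`-bad index sequence with all indices in `{1, …, n}`. -/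
def KSpecialFin {α : Type*} (k : ℕ) (S : ℕ → α) (n : ℕ) : Prop :=
  ¬ ∃ r m i, KBadIdx k S r m i ∧ ∀ j, 1 ≤ j → j ≤ 2 * r → 1 ≤ i j ∧ i j ≤ n

/-- An infinite sequence `S` (1-indexed) is `k`-special if it admits no `k`-bad index
sequence. -/
def KSpecialInf {α : Type*} (k : ℕ) (S : ℕ → α) : Prop :=
  ¬ ∃ r m i, KBadIdx k S r m i ∧ ∀ j, 1 ≤ j → j ≤ 2 * r → 1 ≤ i j

/-- The sequence `S_{n,c} = 1, 2, …, n, 1, 2, …, c` (1-indexed; entry at position `i` is `i`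
for `i ≤ n` and `i - n` for `i > n`). -/
def Snc (n : ℕ) (c : ℕ) : ℕ → ℕ := fun i => if i ≤ n then i else i - n

/-- The infinite `k`-ary tree: vertices are finite words over `Fin k` (the root is `[]`,
and the children of `v`, in left-to-right order, are `j :: v` for `j : Fin k`). -/
def kTree (k : ℕ) : SimpleGraph (List (Fin k)) :=
  SimpleGraph.fromRel (fun u v => ∃ j : Fin k, u = j :: v)

/-- The (1-based) position in the defining sequence of the color of the edge joining a
non-root vertex to its parent: the edges from the root get positions `1, …, k` left to
right, and if the edge from `v` to its parent has position `i`, then the edges to the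
children of `v` get positions `i + 1, …, i + k` left to right. -/
def edgeIdx {k : ℕ} : List (Fin k) → ℕ
  | [] => 0
  | j :: v => edgeIdx v + (j : ℕ) + 1

/-- The edge-coloring of the infinite `k`-ary tree derived from the 1-indexed sequence `S`. -/
def derivedColoring (k : ℕ) (S : ℕ → ℕ) : Sym2 (List (Fin k)) → ℕ :=
  Sym2.lift ⟨fun u v =>
    if v.length < u.length then S (edgeIdx u)
    else if u.length < v.length then S (edgeIdx v) else 0, by
      intro u v
      rcases lt_trichotomy u.length v.length with h | h | h <;>
        simp [h, lt_asymm, lt_irrefl]⟩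

/-- An infinite 1-indexed sequence is square-free (nonrepetitive) if no contiguous block
is a repetition. -/
def SeqSquareFree {α : Type*} (S : ℕ → α) : Prop :=
  ¬ ∃ p r : ℕ, 1 ≤ p ∧ 1 ≤ r ∧ ∀ j < r, S (p + j) = S (p + r + j)

/-- An infinite 1-indexed sequence is palindrome-free if no contiguous block of length at
least 2 reads the same forwards and backwards. -/
def SeqPalindromeFree {α : Type*} (S : ℕ → α) : Prop :=
  ¬ ∃ p L : ℕ, 1 ≤ p ∧ 2 ≤ L ∧ ∀ j < L, S (p + j) = S (p + L - 1 - j)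

/-- The sequence `S^{(w)}` obtained from the 1-indexed sequence `S` by replacing each
symbol `t` by the block `t⁽⁰⁾, t⁽¹⁾, …, t⁽ʷ⁻¹⁾` of `w` new symbols (encoded as pairs). -/
def blowup {α : Type*} (w : ℕ) (S : ℕ → α) : ℕ → α × ℕ :=
  fun p => (S ((p - 1) / w + 1), (p - 1) % w)



/-- Thue–Morse sequence. -/
def tmSeq (n : ℕ) : ℕ := (Nat.digits 2 n).sum % 2

lemma tmSeq_lt (n : ℕ) : tmSeq n < 2 := Nat.mod_lt _ (by norm_num)

lemma tmSeq_even (n : ℕ) : tmSeq (2 * n) = tmSeq n := by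
  rcases Nat.eq_zero_or_pos n with h | h
  · simp [h]
  · unfold tmSeq
    rw [Nat.digits_def' (by norm_num : 1 < 2) (by omega)]
    simp [Nat.mul_div_cancel_left _ (by norm_num : 0 < 2), Nat.mul_mod_right]

lemma tmSeq_odd (n : ℕ) : tmSeq (2 * n + 1) = 1 - tmSeq n := by
  unfold tmSeq
  rw [Nat.digits_def' (by norm_num : 1 < 2) (by omega)]
  have h1 : (2 * n + 1) % 2 = 1 := by omega
  have h2 : (2 * n + 1) / 2 = n := by omega
  rw [h1, h2]
  simp only [List.sum_cons]
  have := Nat.mod_lt ((Nat.digits 2 n).sum) (show 0 < 2 by norm_num)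
  omega

lemma tm_no111 (p : ℕ) : ¬ (tmSeq p = tmSeq (p+1) ∧ tmSeq (p+1) = tmSeq (p+2)) := by
  rcases Nat.even_or_odd p with ⟨q, hq⟩ | ⟨q, hq⟩
  · rintro ⟨h1, -⟩
    rw [show p = 2*q by omega, show 2*q+1 = 2*q+1 from rfl] at h1
    rw [tmSeq_even, tmSeq_odd] at h1
    have := tmSeq_lt q; omega
  · rintro ⟨-, h2⟩
    rw [show p+1 = 2*(q+1) by omega, show p+2 = 2*(q+1)+1 by omega] at h2
    rw [tmSeq_even, tmSeq_odd] at h2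
    have := tmSeq_lt (q+1); omega


lemma tm_no111' (p a b c : ℕ) (ha : a = p) (hb : b = p + 1) (hc : c = p + 2) :
    ¬ (tmSeq a = tmSeq b ∧ tmSeq b = tmSeq c) := by
  rintro ⟨h1, h2⟩
  rw [ha, hb] at h1
  rw [hb, hc] at h2
  exact tm_no111 p ⟨h1, h2⟩

theorem tm_no_overlap : ∀ r, 1 ≤ r → ∀ p, ¬ (∀ j, j ≤ r → tmSeq (p + j) = tmSeq (p + j + r)) := by
  intro r
  induction r using Nat.strong_induction_on with
  | _ r IH =>
    intro hr p H
    rcases Nat.even_or_odd r with ⟨s, hs⟩ | ⟨s, hs⟩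
    · -- r = s + s, s ≥ 1
      have hs1 : 1 ≤ s := by omega
      rcases Nat.even_or_odd p with ⟨q, hq⟩ | ⟨q, hq⟩
      · refine IH s (by omega) hs1 q (fun j hj => ?_)
        have h := H (2*j) (by omega)
        rw [show p + 2*j = 2*(q+j) by omega, show 2*(q+j) + r = 2*(q+j+s) by omega,
          tmSeq_even, tmSeq_even] at h
        exact h
      · refine IH s (by omega) hs1 q (fun j hj => ?_)
        have h := H (2*j) (by omega)
        rw [show p + 2*j = 2*(q+j) + 1 by omega,
          show 2*(q+j) + 1 + r = 2*(q+j+s) + 1 by omega,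
          tmSeq_odd, tmSeq_odd] at h
        have := tmSeq_lt (q+j); have := tmSeq_lt (q+j+s); omega
    · -- r = 2s+1
      rcases Nat.eq_zero_or_pos s with hs0 | hs0
      · -- r = 1
        obtain rfl : r = 1 := by omega
        have h0 := H 0 (by omega)
        have h1 := H 1 (by omega)
        rw [show p + 0 = p by omega] at h0
        rw [show p + 0 + 1 = p + 1 by omega] at h0
        rw [show p + 1 + 1 = p + 2 by omega] at h1
        exact tm_no111 p ⟨h0, h1⟩
      · rcases Nat.even_or_odd p with ⟨q, hq⟩ | ⟨q, hq⟩
        · -- p even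
          have h0 := H 0 (by omega)
          have h1 := H 1 (by omega)
          have h2 := H 2 (by omega)
          have h3 := H 3 (by omega)
          rw [show p + 0 = 2*q by omega, show 2*q + r = 2*(q+s)+1 by omega,
            tmSeq_even, tmSeq_odd] at h0
          rw [show p + 1 = 2*q+1 by omega, show 2*q+1 + r = 2*(q+s+1) by omega,
            tmSeq_odd, tmSeq_even] at h1
          rw [show p + 2 = 2*(q+1) by omega, show 2*(q+1) + r = 2*(q+s+1)+1 by omega,
            tmSeq_even, tmSeq_odd] at h2
          rw [show p + 3 = 2*(q+1)+1 by omega, show 2*(q+1)+1 + r = 2*(q+s+2) by omega,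
            tmSeq_odd, tmSeq_even] at h3
          refine tm_no111' (q+s) (q+s) (q+s+1) (q+s+2) rfl (by omega) (by omega) ⟨?_, ?_⟩ <;>
          · have := tmSeq_lt q; have := tmSeq_lt (q+1); have := tmSeq_lt (q+s)
            have := tmSeq_lt (q+s+1); have := tmSeq_lt (q+s+2)
            omega
        · -- p odd
          rcases Nat.eq_or_lt_of_le hs0 with hs1 | hs2
          · -- s = 1, r = 3
            have h0 := H 0 (by omega)
            have h1 := H 1 (by omega)
            have h2 := H 2 (by omega)
            have h3 := H 3 (by omega)
            rw [show p + 0 = 2*q+1 by omega, show 2*q+1 + r = 2*(q+2) by omega,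
              tmSeq_odd, tmSeq_even] at h0
            rw [show p + 1 = 2*(q+1) by omega, show 2*(q+1) + r = 2*(q+2)+1 by omega,
              tmSeq_even, tmSeq_odd] at h1
            rw [show p + 2 = 2*(q+1)+1 by omega, show 2*(q+1)+1 + r = 2*(q+3) by omega,
              tmSeq_odd, tmSeq_even] at h2
            rw [show p + 3 = 2*(q+2) by omega, show 2*(q+2) + r = 2*(q+3)+1 by omega,
              tmSeq_even, tmSeq_odd] at h3
            have := tmSeq_lt q; have := tmSeq_lt (q+1); have := tmSeq_lt (q+2)
            have := tmSeq_lt (q+3)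
            omega
          · -- s ≥ 2, r ≥ 5
            have h1 := H 1 (by omega)
            have h2 := H 2 (by omega)
            have h3 := H 3 (by omega)
            have h4 := H 4 (by omega)
            rw [show p + 1 = 2*(q+1) by omega, show 2*(q+1) + r = 2*(q+s+1)+1 by omega,
              tmSeq_even, tmSeq_odd] at h1
            rw [show p + 2 = 2*(q+1)+1 by omega, show 2*(q+1)+1 + r = 2*(q+s+2) by omega,
              tmSeq_odd, tmSeq_even] at h2
            rw [show p + 3 = 2*(q+2) by omega, show 2*(q+2) + r = 2*(q+s+2)+1 by omega,
              tmSeq_even, tmSeq_odd] at h3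
            rw [show p + 4 = 2*(q+2)+1 by omega, show 2*(q+2)+1 + r = 2*(q+s+3) by omega,
              tmSeq_odd, tmSeq_even] at h4
            refine tm_no111' (q+s+1) (q+s+1) (q+s+2) (q+s+3) rfl (by omega) (by omega) ⟨?_, ?_⟩ <;>
            · have := tmSeq_lt (q+1); have := tmSeq_lt (q+2); have := tmSeq_lt (q+s+1)
              have := tmSeq_lt (q+s+2); have := tmSeq_lt (q+s+3)
              omega

/-- The squarefree ternary sequence: differences of Thue–Morse. -/
def terSeq (n : ℕ) : ℕ := tmSeq (n+1) + 1 - tmSeq n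

lemma terSeq_lt3 (n : ℕ) : terSeq n < 3 := by
  have := tmSeq_lt (n+1); have := tmSeq_lt n; unfold terSeq; omega

theorem terSeq_sf :
    ¬ ∃ p r : ℕ, 1 ≤ p ∧ 1 ≤ r ∧ ∀ j < r, terSeq (p + j) = terSeq (p + r + j) := by
  rintro ⟨p, r, hp, hr, hsq⟩
  have Hδ : ∀ j, j ≤ r → tmSeq (p + j) + tmSeq (p + r) = tmSeq (p + r + j) + tmSeq p := by
    intro j hj
    induction j with
    | zero =>
      rw [show p + 0 = p by omega, show p + r + 0 = p + r by omega]
      omega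
    | succ n ih =>
      have ihh := ih (by omega)
      have h := hsq n (by omega)
      unfold terSeq at h
      rw [show p + n + 1 = p + (n+1) by omega, show p + r + n + 1 = p + r + (n+1) by omega] at h
      have b1 := tmSeq_lt (p + n); have b2 := tmSeq_lt (p + (n+1))
      have b3 := tmSeq_lt (p + r + n); have b4 := tmSeq_lt (p + r + (n+1))
      have b5 := tmSeq_lt p; have b6 := tmSeq_lt (p + r)
      omega
  by_cases h0 : tmSeq (p + r) = tmSeq p
  · refine tm_no_overlap r hr p (fun j hj => ?_)
    have h := Hδ j hj
    rw [show p + j + r = p + r + j by omega]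
    have b1 := tmSeq_lt (p + j); have b2 := tmSeq_lt (p + r + j)
    have b3 := tmSeq_lt p; have b4 := tmSeq_lt (p + r)
    omega
  · rcases Nat.lt_or_ge r 2 with hr2 | hr2
    · -- r = 1
      obtain rfl : r = 1 := by omega
      have h := hsq 0 (by omega)
      rw [show p + 0 = p by omega, show p + 1 + 0 = p + 1 by omega] at h
      unfold terSeq at h
      rw [show p + 1 + 1 = p + 2 by omega] at h
      have b1 := tmSeq_lt p; have b2 := tmSeq_lt (p+1); have b3 := tmSeq_lt (p+2)
      omega
    · -- r ≥ 2
      have e1 := Hδ 1 (by omega)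
      have e2 := Hδ 2 (by omega)
      have b1 := tmSeq_lt p; have b2 := tmSeq_lt (p+1); have b3 := tmSeq_lt (p+2)
      have b4 := tmSeq_lt (p+r); have b5 := tmSeq_lt (p+r+1); have b6 := tmSeq_lt (p+r+2)
      exact tm_no111' p p (p+1) (p+2) rfl rfl rfl ⟨by omega, by omega⟩

section helpers

lemma blk_diff {w x y : ℕ} (hw : 0 < w) (hx : 1 ≤ x) (hxy : x ≤ y)
    (hmod : (x-1) % w = (y-1) % w) :
    ∃ c : ℕ, y = x + w * c ∧ (y-1)/w = (x-1)/w + c := by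
  have hab : x - 1 ≤ y - 1 := by omega
  have hdvd : w ∣ (y-1) - (x-1) := (Nat.modEq_iff_dvd' hab).mp hmod
  obtain ⟨c, hc⟩ := hdvd
  refine ⟨c, ?_, ?_⟩
  · have h2 : y - 1 = (x - 1) + w * c := by omega
    omega
  · have h2 : y - 1 = (x - 1) + w * c := by omega
    rw [h2, Nat.add_mul_div_left _ _ hw]

lemma blkZ {w x y : ℕ} (hw : 0 < w) (hx : 1 ≤ x) (hy : 1 ≤ y)
    (hmod : (x-1) % w = (y-1) % w) :
    (y:ℤ) - x = (w:ℤ) * ((((y-1)/w : ℕ) : ℤ) - (((x-1)/w : ℕ) : ℤ)) := by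
  rcases le_total x y with h | h
  · obtain ⟨c, hc1, hc2⟩ := blk_diff hw hx h hmod
    rw [hc2, hc1]; push_cast; ring
  · obtain ⟨c, hc1, hc2⟩ := blk_diff hw hy h hmod.symm
    rw [hc2, hc1]; push_cast; ring

lemma div_stepdown {w x y k : ℕ} (hw : w = k + 1) (h1 : 1 ≤ y) (h2 : y < x) (h3 : x ≤ y + k) :
    (y-1)/w ≤ (x-1)/w ∧ (x-1)/w ≤ (y-1)/w + 1 := by
  constructor
  · exact Nat.div_le_div_right (by omega)
  · calc (x-1)/w ≤ ((y-1) + w)/w := Nat.div_le_div_right (by omega)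
    _ = (y-1)/w + 1 := Nat.add_div_right _ (by omega)

lemma factor_pos {w E : ℤ} (hw : 1 ≤ w) (h1 : 1 ≤ w * E) : 1 ≤ E := by
  nlinarith

lemma factor_eq_one {w E : ℤ} (hw : 2 ≤ w) (h1 : 2 ≤ w * E) (h2 : w * E ≤ 2*w - 2) : E = 1 := by
  rcases lt_trichotomy E 1 with h | h | h
  · nlinarith
  · exact h
  · nlinarith

lemma factor_eq_zero {w E : ℤ} (hw : 2 ≤ w) (h1 : -(w-2) ≤ w * E) (h2 : w * E ≤ w - 2) : E = 0 := by
  rcases lt_trichotomy E 0 with h | h | h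
  · nlinarith
  · exact h
  · nlinarith

end helpers

theorem blowup_kspecial (k : ℕ) (hk : 1 ≤ k) (S : ℕ → ℕ) (hSF : SeqSquareFree S) :
    KSpecialInf k (blowup (k + 1) S) := by
  rintro ⟨r, m, i, ⟨hr, hm1, hm2, hrep, hdec, hinc, hgap, hturn⟩, hpos⟩
  set w := k + 1 with hw
  have hw0 : 0 < w := by omega
  have hw2 : (2:ℤ) ≤ (w:ℤ) := by push_cast; omega
  obtain ⟨D, hD⟩ : ∃ D : ℕ → ℕ, ∀ j, D j = (i j - 1)/w := ⟨_, fun _ => rfl⟩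
  have hphase : ∀ j, 1 ≤ j → j ≤ r → (i j - 1) % w = (i (j + r) - 1) % w := by
    intro j h1 h2
    have h := hrep j h1 h2
    simp only [blowup, Prod.mk.injEq] at h
    exact h.2
  have hval : ∀ j, 1 ≤ j → j ≤ r → S (D j + 1) = S (D (j + r) + 1) := by
    intro j h1 h2
    have h := hrep j h1 h2
    simp only [blowup, Prod.mk.injEq] at h
    rw [hD, hD]
    exact h.1
  have hblk : ∀ j, 1 ≤ j → j ≤ r →
      ((i (j+r) : ℤ) - i j) = (w:ℤ) * ((D (j+r) : ℤ) - (D j : ℤ)) := by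
    intro j h1 h2
    have := blkZ hw0 (hpos j h1 (by omega)) (hpos (j+r) (by omega) (by omega)) (hphase j h1 h2)
    rw [hD, hD]
    exact this
  -- one-element square helper
  have sq1 : ∀ p : ℕ, 1 ≤ p → S p = S (p + 1) → False := by
    intro p hp h
    exact hSF ⟨p, 1, hp, le_refl 1, fun t ht => by
      obtain rfl : t = 0 := by omega
      rw [show p + 0 = p by omega, show p + 1 + 0 = p + 1 by omega]
      exact h⟩
  by_cases hcase : m < 2 * r
  · -- the turn is internal on the first-half scale: find a mixed pair of steps
    have key : ∀ j, 1 ≤ j → j + 1 ≤ r → j < m → m ≤ j + r → False := by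
      intro j hj1 hj2 hj3 hj4
      have hjr : j + r < 2 * r := by omega
      have ha1 : 1 ≤ i (j+1) := hpos (j+1) (by omega) (by omega)
      have hq1 : 1 ≤ i (j+r) := hpos (j+r) (by omega) (by omega)
      have hdec1 : i (j+1) < i j := hdec j hj1 hj3
      have hgap1 : i j ≤ i (j+1) + k := (hgap j hj1 (by omega)).2
      have hinc1 : i (j+r) < i (j+r+1) := hinc (j+r) hj4 hjr
      have hgap2 : i (j+r+1) ≤ i (j+r) + k := (hgap (j+r) (by omega) hjr).1
      have d1 := hblk j hj1 (by omega)
      have d2 := hblk (j+1) (by omega) hj2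
      rw [show j + 1 + r = j + r + 1 by omega] at d2
      -- E = (D (j+r+1) - D (j+1)) - (D (j+r) - D j) satisfies w * E ∈ [2, 2w-2]
      have hE : ((D (j+r+1) : ℤ) - (D (j+1) : ℤ)) - ((D (j+r) : ℤ) - (D j : ℤ)) = 1 := by
        apply factor_eq_one hw2
        · rw [mul_sub]
          rw [← d1, ← d2]
          push_cast
          omega
        · rw [mul_sub]
          rw [← d1, ← d2]
          push_cast
          omega
      have hs := div_stepdown hw ha1 hdec1 hgap1
      rw [← hD, ← hD] at hs
      -- two cases
      have hcases : (D (j+1) = D j ∧ D (j+r+1) = D (j+r) + 1) ∨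
          (D j = D (j+1) + 1 ∧ D (j+r+1) = D (j+r)) := by omega
      have hv1 := hval j hj1 (by omega)
      have hv2 := hval (j+1) (by omega) hj2
      rw [show j + 1 + r = j + r + 1 by omega] at hv2
      rcases hcases with ⟨e1, e2⟩ | ⟨e1, e2⟩
      · refine sq1 (D (j+r) + 1) (by omega) ?_
        rw [← hv1, ← e2, ← e1]
        exact hv2
      · refine sq1 (D (j+1) + 1) (by omega) ?_
        rw [hv2, e2, ← hv1, e1]
    rcases le_or_gt m r with hmr | hmr
    · exact key (m-1) (by omega) (by omega) (by omega) (by omega)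
    · exact key (m-r) (by omega) (by omega) (by omega) (by omega)
  · -- m = 2r : the whole index sequence is strictly decreasing
    have hm2r : m = 2 * r := by omega
    have hdecAll : ∀ j, 1 ≤ j → j < 2*r → i (j+1) < i j := by
      intro j h1 h2; exact hdec j h1 (by omega)
    have hchain : ∀ d j, 1 ≤ j → j + d ≤ 2*r → i (j+d) ≤ i j ∧ (1 ≤ d → i (j+d) < i j) := by
      intro d
      induction d with
      | zero => intro j h1 h2; simp
      | succ n ih =>
        intro j h1 h2
        have hn := ih j h1 (by omega)
        have hstep : i (j+n+1) < i (j+n) := hdecAll (j+n) (by omega) (by omega)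
        rw [show j + (n+1) = j + n + 1 by omega]
        omega
    -- block function facts
    have hstepD : ∀ j, 1 ≤ j → j < 2*r → D (j+1) ≤ D j ∧ D j ≤ D (j+1) + 1 := by
      intro j h1 h2
      have := div_stepdown hw (hpos (j+1) (by omega) (by omega)) (hdecAll j h1 h2)
        (hgap j h1 h2).2
      rw [← hD, ← hD] at this
      exact this
    -- the constant C
    have hCpos : ∀ j, 1 ≤ j → j ≤ r → 1 ≤ (D j : ℤ) - D (j+r) := by
      intro j h1 h2
      apply factor_pos (by omega : (1:ℤ) ≤ (w:ℤ))
      have hd := hblk j h1 h2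
      have hlt : i (j+r) < i j := (hchain r j h1 (by omega)).2 hr
      have : (w:ℤ) * ((D j : ℤ) - D (j+r)) = (i j : ℤ) - i (j+r) := by
        rw [mul_sub]
        have := hd
        rw [mul_sub] at this
        omega
      rw [this]
      push_cast
      omega
    have hconst : ∀ j, 1 ≤ j → j ≤ r → (D j : ℤ) - D (j+r) = (D 1 : ℤ) - D (1+r) := by
      intro j h1 h2
      induction j with
      | zero => omega
      | succ n ih =>
        rcases Nat.eq_zero_or_pos n with rfl | hn
        · rfl
        · have ihh := ih hn (by omega)
          have hz : ((D (n+r) : ℤ) - D n) - ((D (n+1+r) : ℤ) - D (n+1)) = 0 := by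
            apply factor_eq_zero hw2
            · rw [mul_sub, ← hblk n hn (by omega), ← hblk (n+1) (by omega) h2]
              have g1 := hgap n hn (by omega)
              have g2 := hgap (n+r) (by omega) (by omega)
              have l1 := hdecAll n hn (by omega)
              have l2 := hdecAll (n+r) (by omega) (by omega)
              rw [show n + 1 + r = n + r + 1 by omega]
              push_cast
              omega
            · rw [mul_sub, ← hblk n hn (by omega), ← hblk (n+1) (by omega) h2]
              have g1 := hgap n hn (by omega)
              have g2 := hgap (n+r) (by omega) (by omega)
              have l1 := hdecAll n hn (by omega)
              have l2 := hdecAll (n+r) (by omega) (by omega)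
              rw [show n + 1 + r = n + r + 1 by omega]
              push_cast
              omega
          omega
    -- C as a natural number
    obtain ⟨c, hc⟩ : ∃ c : ℕ, (c : ℤ) = (D 1 : ℤ) - D (1+r) :=
      ⟨((D 1 : ℤ) - D (1+r)).toNat, Int.toNat_of_nonneg (by have := hCpos 1 (by omega) hr; omega)⟩
    have hc1 : 1 ≤ c := by have := hCpos 1 (by omega) hr; omega
    have hDshift : ∀ j, 1 ≤ j → j ≤ r → D (j+r) + c = D j := by
      intro j h1 h2
      have := hconst j h1 h2
      omega
    -- discrete IVT on D over [1, r]
    have hivt : ∀ n, 1 ≤ n → n ≤ r → ∀ β, D n ≤ β → β ≤ D 1 → ∃ j, 1 ≤ j ∧ j ≤ n ∧ D j = β := by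
      intro n
      induction n with
      | zero => omega
      | succ n ih =>
        intro h1 h2 β hb1 hb2
        rcases Nat.eq_zero_or_pos n with rfl | hn
        · refine ⟨1, by omega, by omega, ?_⟩
          simp only [Nat.zero_add] at hb1
          omega
        · rcases le_or_gt (D n) β with h | h
          · obtain ⟨j, hj⟩ := ih hn (by omega) β h hb2
            exact ⟨j, hj.1, by omega, hj.2.2⟩
          · have := hstepD n hn (by omega)
            exact ⟨n+1, by omega, by omega, by omega⟩
    -- coverage bound: D r ≤ D (1+r) + 1
    have hDr : D r ≤ D (1+r) + 1 := by
      have h := hstepD r hr (by omega)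
      have e : r + 1 = 1 + r := by omega
      rw [e] at h
      exact h.2
    -- c ≤ D (1+r) + 1
    have hcb : c ≤ D (1+r) + 1 := by
      -- the block D (1+r) + 1 is covered: D j₀ = D (1+r) + 1 for some j₀ ∈ [1,r], and D (j₀+r) + c = D j₀
      obtain ⟨j0, hj01, hj02, hj03⟩ := hivt r hr (le_refl r) (D (1+r) + 1) (by omega) (by omega)
      have := hDshift j0 hj01 hj02
      omega
    -- build the square
    refine hSF ⟨D (1+r) + 2 - c, c, by omega, hc1, fun t ht => ?_⟩
    obtain ⟨j, hj1, hj2, hj3⟩ := hivt r hr (le_refl r) (D (1+r) + 1 + t) (by omega) (by omega)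
    have hsh := hDshift j hj1 hj2
    have hv := hval j hj1 hj2
    have e1 : D (1+r) + 2 - c + t = D (j+r) + 1 := by omega
    have e2 : D (1+r) + 2 - c + c + t = D j + 1 := by omega
    rw [e1, e2, hv]

open SimpleGraph

section Tree

variable {k : ℕ}

/-- Index of the deeper endpoint of a dart. -/
def gIdx (d : (kTree k).Dart) : ℕ := max (edgeIdx d.toProd.1) (edgeIdx d.toProd.2)

def IsUp (d : (kTree k).Dart) : Prop := ∃ j : Fin k, d.toProd.1 = j :: d.toProd.2

def IsDown (d : (kTree k).Dart) : Prop := ∃ j : Fin k, d.toProd.2 = j :: d.toProd.1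

lemma adj_cases {u v : List (Fin k)} (h : (kTree k).Adj u v) :
    (∃ j : Fin k, u = j :: v) ∨ (∃ j : Fin k, v = j :: u) :=
  ((SimpleGraph.fromRel_adj _ u v).mp h).2

lemma up_or_down (d : (kTree k).Dart) : IsUp d ∨ IsDown d := adj_cases d.adj

lemma gIdx_up {d : (kTree k).Dart} (h : IsUp d) :
    ∃ j : Fin k, gIdx d = edgeIdx d.toProd.2 + (j : ℕ) + 1 := by
  obtain ⟨j, hj⟩ := h
  refine ⟨j, ?_⟩
  unfold gIdx
  rw [hj]
  simp [edgeIdx]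
  omega

lemma gIdx_down {d : (kTree k).Dart} (h : IsDown d) :
    ∃ j : Fin k, gIdx d = edgeIdx d.toProd.1 + (j : ℕ) + 1 := by
  obtain ⟨j, hj⟩ := h
  refine ⟨j, ?_⟩
  unfold gIdx
  rw [hj]
  simp [edgeIdx]
  omega

lemma gIdx_up_eq {d : (kTree k).Dart} (h : IsUp d) : gIdx d = edgeIdx d.toProd.1 := by
  obtain ⟨j, hj⟩ := h
  unfold gIdx
  rw [hj]
  simp [edgeIdx]
  omega

lemma gIdx_down_eq {d : (kTree k).Dart} (h : IsDown d) : gIdx d = edgeIdx d.toProd.2 := by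
  obtain ⟨j, hj⟩ := h
  unfold gIdx
  rw [hj]
  simp [edgeIdx]
  omega

lemma gIdx_pos (d : (kTree k).Dart) : 1 ≤ gIdx d := by
  rcases up_or_down d with h | h
  · obtain ⟨j, hj⟩ := gIdx_up h; omega
  · obtain ⟨j, hj⟩ := gIdx_down h; omega

lemma color_dart (S : ℕ → ℕ) (d : (kTree k).Dart) :
    derivedColoring k S d.edge = S (gIdx d) := by
  rcases up_or_down d with h | h
  · have hg := gIdx_up_eq h
    obtain ⟨j, hj⟩ := h
    have hlen : d.toProd.2.length < d.toProd.1.length := by rw [hj]; simp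
    have := hg
    unfold derivedColoring Dart.edge
    rw [Sym2.lift_mk]
    simp only [hlen, if_pos]
    rw [this]
  · have hg := gIdx_down_eq h
    obtain ⟨j, hj⟩ := h
    have hlen : d.toProd.1.length < d.toProd.2.length := by rw [hj]; simp
    have := hg
    unfold derivedColoring Dart.edge
    rw [Sym2.lift_mk]
    simp only [hlen, if_pos, if_neg (by omega : ¬ d.toProd.2.length < d.toProd.1.length)]
    rw [this]

lemma walk_colors (S : ℕ → ℕ) {u v : List (Fin k)} (p : (kTree k).Walk u v) :
    p.edges.map (derivedColoring k S) = (p.darts.map gIdx).map S := by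
  rw [Walk.edges, List.map_map, List.map_map]
  congr 1
  funext d
  exact color_dart S d

end Tree

section Tree2

variable {k : ℕ}

lemma not_up_down (d : (kTree k).Dart) : ¬ (IsUp d ∧ IsDown d) := by
  rintro ⟨⟨j, hj⟩, ⟨j', hj'⟩⟩
  have h1 : d.toProd.1.length = d.toProd.2.length + 1 := by rw [hj]; simp
  have h2 : d.toProd.2.length = d.toProd.1.length + 1 := by rw [hj']; simp
  omega

/-- In a path, endpoints two apart are distinct, and a down dart is never
followed by an up dart. -/
lemma chain_path {u v : List (Fin k)} (p : (kTree k).Walk u v) (hp : p.IsPath) :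
    List.Chain' (fun d d' : (kTree k).Dart =>
      d.toProd.1 ≠ d'.toProd.2 ∧ (IsDown d → IsDown d')) p.darts := by
  induction p with
  | nil => exact List.isChain_nil
  | @cons a b c h q ih =>
    rw [SimpleGraph.Walk.cons_isPath_iff] at hp
    rw [SimpleGraph.Walk.darts_cons]
    cases q with
    | nil => exact List.isChain_singleton _
    | @cons _ x _ h' q' =>
      rw [SimpleGraph.Walk.darts_cons]
      have hax : a ≠ x := by
        intro hcon
        apply hp.2
        rw [hcon]
        rw [SimpleGraph.Walk.support_cons]
        exact List.mem_cons_of_mem _ (SimpleGraph.Walk.start_mem_support _)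
      refine List.IsChain.cons_cons ⟨hax, ?_⟩ ?_
      · rintro ⟨j, hj⟩
        rcases up_or_down (SimpleGraph.Dart.mk (_, x) h') with hup | hdown
        · exfalso
          obtain ⟨j', hj'⟩ := hup
          simp only at hj hj' 
          rw [hj'] at hj
          exact hax (by injection hj with h1 h2; exact h2.symm)
        · exact hdown
      · have := ih hp.1
        rw [SimpleGraph.Walk.darts_cons] at this
        exact this

end Tree2

section Tree3

variable {k : ℕ}

lemma pair_uu {d d' : (kTree k).Dart} (h : IsUp d) (h' : IsUp d')
    (hadj : d.toProd.2 = d'.toProd.1) : gIdx d' < gIdx d ∧ gIdx d ≤ gIdx d' + k := by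
  obtain ⟨j, hj⟩ := gIdx_up h
  have h2 := gIdx_up_eq h'
  rw [← hadj] at h2
  have hjk : (j : ℕ) < k := j.isLt
  omega

lemma pair_dd {d d' : (kTree k).Dart} (h : IsDown d) (h' : IsDown d')
    (hadj : d.toProd.2 = d'.toProd.1) : gIdx d < gIdx d' ∧ gIdx d' ≤ gIdx d + k := by
  obtain ⟨j', hj'⟩ := gIdx_down h'
  have h2 := gIdx_down_eq h
  rw [hadj] at h2
  have hjk : (j' : ℕ) < k := j'.isLt
  omega

lemma pair_ud {d d' : (kTree k).Dart} (h : IsUp d) (h' : IsDown d')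
    (hadj : d.toProd.2 = d'.toProd.1) (hne : d.toProd.1 ≠ d'.toProd.2) :
    gIdx d ≠ gIdx d' ∧ gIdx d < gIdx d' + k ∧ gIdx d' < gIdx d + k := by
  obtain ⟨j, hj⟩ := h
  obtain ⟨j', hj'⟩ := h'
  have e1 : gIdx d = edgeIdx d.toProd.2 + (j : ℕ) + 1 := by
    unfold gIdx; rw [hj]; simp [edgeIdx]; omega
  have e2 : gIdx d' = edgeIdx d'.toProd.1 + (j' : ℕ) + 1 := by
    unfold gIdx; rw [hj']; simp [edgeIdx]; omega
  rw [← hadj] at e2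
  have hjk : (j : ℕ) < k := j.isLt
  have hjk' : (j' : ℕ) < k := j'.isLt
  have hjj : (j : ℕ) ≠ (j' : ℕ) := by
    intro hcon
    apply hne
    rw [hj, hj', hadj]
    congr 1
    exact Fin.ext hcon
  omega

/-- Shape certificate for the list of edge indices along a path:
positions `< t0` carry up-darts, positions `≥ t0` down-darts. -/
def ShapeAt (k : ℕ) (I : List ℕ) (t0 : ℕ) : Prop :=
  (∀ t, t + 1 < t0 → I.getD (t+1) 0 < I.getD t 0 ∧ I.getD t 0 ≤ I.getD (t+1) 0 + k) ∧
  (∀ t, t0 ≤ t → t + 1 < I.length → I.getD t 0 < I.getD (t+1) 0 ∧ I.getD (t+1) 0 ≤ I.getD t 0 + k) ∧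
  (1 ≤ t0 → t0 < I.length →
    I.getD (t0-1) 0 ≠ I.getD t0 0 ∧ I.getD (t0-1) 0 < I.getD t0 0 + k ∧
    I.getD t0 0 < I.getD (t0-1) 0 + k)

open scoped Classical in
lemma shape_exists {u v : List (Fin k)} (p : (kTree k).Walk u v) (hp : p.IsPath)
    (hL : 0 < p.darts.length) :
    ∃ t0, t0 ≤ (p.darts.map gIdx).length ∧ ShapeAt k (p.darts.map gIdx) t0 := by
  set D := p.darts with hD
  set L := D.length with hLdef
  set I := D.map gIdx with hI
  have hIL : I.length = L := by rw [hI, List.length_map]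
  -- total accessor for darts
  obtain ⟨df, hdf⟩ : ∃ df : ℕ → (kTree k).Dart, ∀ t (ht : t < L), df t = D.get ⟨t, ht⟩ :=
    ⟨fun t => D.getD t (D.get ⟨0, hL⟩), fun t ht => List.getD_eq_getElem _ _ ht⟩
  have hJ : ∀ t, t < L → I.getD t 0 = gIdx (df t) := by
    intro t ht
    rw [hI, List.getD_eq_getElem _ _ (by rw [List.length_map]; exact ht), List.getElem_map,
      hdf t ht]
    rfl
  have hadj : ∀ t, t + 1 < L → (df t).toProd.2 = (df (t+1)).toProd.1 := by
    intro t ht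
    have := (List.isChain_iff_getElem.mp (SimpleGraph.Walk.isChain_dartAdj_darts p)) t
      (by rw [← hD]; omega)
    rw [hdf t (by omega), hdf (t+1) ht]
    exact this
  have hchain2 := List.isChain_iff_getElem.mp (chain_path p hp)
  have hne2 : ∀ t, t + 1 < L → (df t).toProd.1 ≠ (df (t+1)).toProd.2 := by
    intro t ht
    have := hchain2 t (by rw [← hD]; omega)
    rw [hdf t (by omega), hdf (t+1) ht]
    exact this.1
  have hdu : ∀ t, t + 1 < L → IsDown (df t) → IsDown (df (t+1)) := by
    intro t ht
    have := hchain2 t (by rw [← hD]; omega)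
    rw [hdf t (by omega), hdf (t+1) ht]
    exact this.2
  by_cases hAll : ∀ t, t < L → IsUp (df t)
  · refine ⟨L, by omega, ?_, ?_, ?_⟩
    · intro t ht
      rw [hJ t (by omega), hJ (t+1) (by omega)]
      exact pair_uu (hAll t (by omega)) (hAll (t+1) (by omega)) (hadj t (by omega))
    · intro t ht htl
      rw [hIL] at htl
      omega
    · intro h1 h2
      rw [hIL] at h2
      omega
  · push_neg at hAll
    have hPex : ∃ t, t < L ∧ IsDown (df t) := by
      obtain ⟨t, ht, hnup⟩ := hAll
      exact ⟨t, ht, (up_or_down (df t)).resolve_left hnup⟩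
    obtain ⟨t0, ht0L, ht0down, hupmin⟩ :
        ∃ t0, t0 < L ∧ IsDown (df t0) ∧ ∀ t, t < t0 → ¬ IsDown (df t) := by
      refine ⟨Nat.find hPex, (Nat.find_spec hPex).1, (Nat.find_spec hPex).2, ?_⟩
      intro t ht hd
      exact Nat.find_min hPex ht ⟨by have := (Nat.find_spec hPex).1; omega, hd⟩
    have hup : ∀ t, t < t0 → IsUp (df t) := by
      intro t ht
      rcases up_or_down (df t) with h | h
      · exact h
      · exact absurd h (hupmin t ht)
    have hdown : ∀ t, t0 ≤ t → t < L → IsDown (df t) := by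
      intro t ht htL
      induction t with
      | zero => have : t0 = 0 := by omega
                rw [← this]; exact ht0down
      | succ n ih =>
        rcases Nat.lt_or_ge n t0 with h | h
        · have : t0 = n + 1 := by omega
          rw [← this]; exact ht0down
        · exact hdu n (by omega) (ih h (by omega))
    refine ⟨t0, by omega, ?_, ?_, ?_⟩
    · intro t ht
      rw [hJ t (by omega), hJ (t+1) (by omega)]
      exact pair_uu (hup t (by omega)) (hup (t+1) (by omega)) (hadj t (by omega))
    · intro t ht htl
      rw [hIL] at htl
      rw [hJ t (by omega), hJ (t+1) (by omega)]
      exact pair_dd (hdown t (by omega) (by omega)) (hdown (t+1) (by omega) (by omega))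
        (hadj t (by omega))
    · intro h1 h2
      rw [hIL] at h2
      obtain ⟨s, rfl⟩ : ∃ s, t0 = s + 1 := ⟨t0 - 1, by omega⟩
      rw [show s + 1 - 1 = s by omega]
      rw [hJ s (by omega), hJ (s+1) (by omega)]
      have := pair_ud (hup s (by omega)) ht0down (hadj s (by omega)) (hne2 s (by omega))
      exact ⟨this.1, this.2.1, this.2.2⟩
  end Tree3

section Shape

/-- Conditions on the (1-indexed) index sequence needed for a k-bad sequence with turn m. -/
def GoodShape (k : ℕ) (I : List ℕ) (m : ℕ) : Prop :=
  2 ≤ m ∧ m ≤ I.length ∧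
  (∀ j, 1 ≤ j → j < m → I.getD j 0 < I.getD (j-1) 0 ∧ I.getD (j-1) 0 ≤ I.getD j 0 + k) ∧
  (∀ j, m ≤ j → j < I.length → I.getD (j-1) 0 < I.getD j 0 ∧ I.getD j 0 ≤ I.getD (j-1) 0 + k) ∧
  (m < I.length → I.getD m 0 < I.getD (m-1) 0 + k)

variable {k : ℕ}

lemma shape_reverse {I : List ℕ} {t0 : ℕ} (h : ShapeAt k I t0) (ht : t0 ≤ I.length) :
    ShapeAt k I.reverse (I.length - t0) := by
  obtain ⟨h1, h2, h3⟩ := h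
  set L := I.length with hLdef
  have hrev : ∀ t, t < L → I.reverse.getD t 0 = I.getD (L - 1 - t) 0 := by
    intro t htL
    rw [List.getD_eq_getElem _ _ (by rw [List.length_reverse]; exact htL),
      List.getD_eq_getElem _ _ (by omega : L - 1 - t < I.length),
      List.getElem_reverse]
  refine ⟨?_, ?_, ?_⟩
  · intro t htt
    rw [hrev t (by omega), hrev (t+1) (by omega)]
    have := h2 (L - 2 - t) (by omega) (by omega)
    rw [show L - 2 - t + 1 = L - 1 - t by omega] at this
    rw [show L - 1 - (t+1) = L - 2 - t by omega]
    omega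
  · intro t htt httl
    rw [List.length_reverse] at httl
    rw [hrev t (by omega), hrev (t+1) (by omega)]
    have := h1 (L - 2 - t) (by omega)
    rw [show L - 2 - t + 1 = L - 1 - t by omega] at this
    rw [show L - 1 - (t+1) = L - 2 - t by omega]
    omega
  · intro hh1 hh2
    rw [List.length_reverse] at hh2
    have hx1 : 1 ≤ t0 := by omega
    have hx2 : t0 < L := by omega
    have := h3 hx1 hx2
    rw [hrev (L - t0 - 1) (by omega), hrev (L - t0) (by omega)]
    rw [show L - 1 - (L - t0 - 1) = t0 by omega, show L - 1 - (L - t0) = t0 - 1 by omega]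
    omega

lemma shape_upgrade {I : List ℕ} {t0 : ℕ} (h : ShapeAt k I t0) (hL : t0 + 1 = I.length)
    (h1 : 1 ≤ t0) (hlt : I.getD t0 0 < I.getD (t0-1) 0) : ShapeAt k I I.length := by
  obtain ⟨c1, c2, c3⟩ := h
  have happ := c3 h1 (by omega)
  refine ⟨?_, ?_, ?_⟩
  · intro t ht
    rcases Nat.lt_or_ge (t+1) t0 with hc | hc
    · exact c1 t hc
    · have : t + 1 = t0 := by omega
      rw [this, show t = t0 - 1 by omega]
      omega
  · intro t ht htl
    omega
  · intro hh1 hh2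
    omega

lemma shape_core {I : List ℕ} {t0 : ℕ} (h : ShapeAt k I t0) (hL : 2 ≤ I.length)
    (ht2 : 2 ≤ t0) (ht0L : t0 ≤ I.length)
    (hcase : t0 = I.length ∨ I.getD (t0-1) 0 < I.getD t0 0) :
    GoodShape k I t0 := by
  obtain ⟨c1, c2, c3⟩ := h
  refine ⟨ht2, ht0L, ?_, ?_, ?_⟩
  · intro j hj1 hj2
    obtain ⟨t, rfl⟩ : ∃ t, j = t + 1 := ⟨j - 1, by omega⟩
    rw [show t + 1 - 1 = t by omega]
    exact c1 t (by omega)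
  · intro j hj1 hj2
    obtain ⟨t, rfl⟩ : ∃ t, j = t + 1 := ⟨j - 1, by omega⟩
    rw [show t + 1 - 1 = t by omega]
    rcases Nat.lt_or_ge t0 (t+1) with hc | hc
    · exact c2 t (by omega) (by omega)
    · -- t + 1 = t0 : apex pair, must be the increasing case
      have htt0 : t + 1 = t0 := by omega
      rcases hcase with hc1 | hc2
      · omega
      · have := c3 (by omega) (by omega)
        rw [show t0 - 1 = t by omega] at hc2 this
        rw [show t0 = t + 1 by omega] at hc2 this
        omega
  · intro hml
    have := c3 (by omega) (by omega)
    omega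

lemma shape_main {I : List ℕ} {t0 : ℕ} (h : ShapeAt k I t0) (hL : 2 ≤ I.length)
    (ht0L : t0 ≤ I.length) :
    (∃ m, GoodShape k I m) ∨ (∃ m, GoodShape k I.reverse m) := by
  by_cases hA : t0 = I.length
  · subst hA
    exact Or.inl ⟨I.length, shape_core h hL (by omega) (le_refl _) (Or.inl rfl)⟩
  by_cases hB : t0 = 0
  · subst hB
    right
    have hrs := shape_reverse h (by omega)
    rw [Nat.sub_zero] at hrs
    exact ⟨I.length, shape_core hrs (by rw [List.length_reverse]; omega) (by omega)
      (by rw [List.length_reverse]) (Or.inl (by rw [List.length_reverse]))⟩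
  -- 0 < t0 < length
  have hx1 : 1 ≤ t0 := by omega
  have hx2 : t0 < I.length := by omega
  have happ := h.2.2 hx1 hx2
  rcases Nat.lt_or_ge (I.getD (t0-1) 0) (I.getD t0 0) with hinc | hdec
  · -- apex increasing
    by_cases ht2 : 2 ≤ t0
    · exact Or.inl ⟨t0, shape_core h hL ht2 (by omega) (Or.inr hinc)⟩
    · -- t0 = 1 : reverse, then upgrade
      have ht01 : t0 = 1 := by omega
      right
      have hrs := shape_reverse h (by omega)
      have hlenr : I.reverse.length = I.length := List.length_reverse
      have hrev : ∀ t, t < I.length → I.reverse.getD t 0 = I.getD (I.length - 1 - t) 0 := by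
        intro t htL
        rw [List.getD_eq_getElem _ _ (by rw [List.length_reverse]; exact htL),
          List.getD_eq_getElem _ _ (by omega : I.length - 1 - t < I.length),
          List.getElem_reverse]
      have hup := shape_upgrade hrs (by omega) (by omega) ?_
      · exact ⟨I.reverse.length,
          shape_core hup (by omega) (by omega) (le_refl _) (Or.inl rfl)⟩
      · rw [hrev (I.length - t0) (by omega), hrev (I.length - t0 - 1) (by omega)]
        rw [show I.length - 1 - (I.length - t0) = t0 - 1 by omega,
          show I.length - 1 - (I.length - t0 - 1) = t0 by omega, ht01]
        rw [ht01] at hinc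
        exact hinc
  · -- apex decreasing (strict since ≠)
    have hdecs : I.getD t0 0 < I.getD (t0-1) 0 := by
      have := h.2.2 hx1 hx2
      omega
    by_cases htL2 : t0 + 1 = I.length
    · -- upgrade I itself
      have hup := shape_upgrade h htL2 (by omega) hdecs
      exact Or.inl ⟨I.length, shape_core hup hL (by omega) (le_refl _) (Or.inl rfl)⟩
    · -- t0 ≤ length - 2 : reverse is core-ready
      right
      have hrs := shape_reverse h (by omega)
      have hrev : ∀ t, t < I.length → I.reverse.getD t 0 = I.getD (I.length - 1 - t) 0 := by
        intro t htL
        rw [List.getD_eq_getElem _ _ (by rw [List.length_reverse]; exact htL),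
          List.getD_eq_getElem _ _ (by omega : I.length - 1 - t < I.length),
          List.getElem_reverse]
      refine ⟨I.length - t0, shape_core hrs (by rw [List.length_reverse]; omega) (by omega)
        (by rw [List.length_reverse]; omega) (Or.inr ?_)⟩
      rw [hrev (I.length - t0) (by omega), hrev (I.length - t0 - 1) (by omega)]
      rw [show I.length - 1 - (I.length - t0) = t0 - 1 by omega,
        show I.length - 1 - (I.length - t0 - 1) = t0 by omega]
      exact hdecs

end Shape

section Finish

/-- The flattened (one-dimensional) version of the blown-up sequence. -/
def flat (k : ℕ) (S : ℕ → ℕ) (p : ℕ) : ℕ := (k+1) * S ((p-1)/(k+1) + 1) + (p-1) % (k+1)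

lemma flat_inj {k : ℕ} {S : ℕ → ℕ} {a b : ℕ} (h : flat k S a = flat k S b) :
    blowup (k+1) S a = blowup (k+1) S b := by
  have hk0 : 0 < k + 1 := Nat.succ_pos k
  have hma : flat k S a % (k+1) = (a-1) % (k+1) := by
    unfold flat
    rw [Nat.mul_add_mod, Nat.mod_mod_of_dvd _ dvd_rfl]
  have hmb : flat k S b % (k+1) = (b-1) % (k+1) := by
    unfold flat
    rw [Nat.mul_add_mod, Nat.mod_mod_of_dvd _ dvd_rfl]
  have hda : flat k S a / (k+1) = S ((a-1)/(k+1) + 1) := by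
    unfold flat
    rw [Nat.mul_add_div hk0, Nat.div_eq_of_lt (Nat.mod_lt _ hk0), Nat.add_zero]
  have hdb : flat k S b / (k+1) = S ((b-1)/(k+1) + 1) := by
    unfold flat
    rw [Nat.mul_add_div hk0, Nat.div_eq_of_lt (Nat.mod_lt _ hk0), Nat.add_zero]
  unfold blowup
  rw [Prod.mk.injEq]
  constructor
  · rw [← hda, ← hdb, h]
  · rw [← hma, ← hmb, h]

lemma finish_bad {k m : ℕ} {S : ℕ → ℕ} {J wl : List ℕ} (hk : 1 ≤ k) (hr : 1 ≤ wl.length)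
    (hlen : J.length = 2 * wl.length)
    (hgs : GoodShape k J m)
    (hmap : J.map (flat k S) = wl ++ wl)
    (hposJ : ∀ t, t < J.length → 1 ≤ J.getD t 0)
    (hsp : KSpecialInf k (blowup (k+1) S)) : False := by
  obtain ⟨hm2, hmL, hdec, hinc, hturn⟩ := hgs
  set r := wl.length with hrdef
  apply hsp
  have hflat : ∀ t, t < 2*r → flat k S (J.getD t 0) = (wl ++ wl).getD t 0 := by
    intro t ht
    have h1 : t < (List.map (flat k S) J).length := by rw [List.length_map]; omega
    have h2 : t < J.length := by omega
    rw [← hmap, List.getD_eq_getElem _ _ h1, List.getD_eq_getElem _ _ h2, List.getElem_map]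
  refine ⟨r, m, fun j => J.getD (j-1) 0, ⟨hr, by omega, by omega, ?_, ?_, ?_, ?_, ?_⟩, ?_⟩
  · -- repetition
    intro j hj1 hj2
    apply flat_inj
    have e1 := hflat (j-1) (by omega)
    have e2 := hflat (j+r-1) (by omega)
    rw [List.getD_append _ _ _ _ (by omega)] at e1
    rw [List.getD_append_right _ _ _ _ (by omega)] at e2
    rw [show j + r - 1 - wl.length = j - 1 by omega] at e2
    rw [e1, e2]
  · -- decreasing
    intro j hj1 hj2
    beta_reduce
    have := hdec j hj1 hj2
    rw [show j + 1 - 1 = j by omega]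
    exact this.1
  · -- increasing
    intro j hj1 hj2
    beta_reduce
    have := hinc j hj1 (by omega)
    rw [show j + 1 - 1 = j by omega]
    exact this.1
  · -- gaps
    intro j hj1 hj2
    beta_reduce
    rw [show j + 1 - 1 = j by omega]
    rcases Nat.lt_or_ge j m with hc | hc
    · have := hdec j hj1 hc
      omega
    · have := hinc j hc (by omega)
      omega
  · -- turn
    intro hml
    beta_reduce
    have := hturn (by omega)
    rw [show m + 1 - 1 = m by omega]
    exact this
  · -- positivity
    intro j hj1 hj2
    beta_reduce
    exact hposJ (j-1) (by omega)

end Finish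

section Top

variable {k : ℕ}

lemma posJ {u v : List (Fin k)} (p : (kTree k).Walk u v) :
    ∀ t, t < (p.darts.map gIdx).length → 1 ≤ (p.darts.map gIdx).getD t 0 := by
  intro t ht
  rw [List.getD_eq_getElem _ _ ht]
  rw [List.length_map] at ht
  rw [List.getElem_map]
  exact gIdx_pos _

theorem derived_nonrep (hk : 1 ≤ k) (S : ℕ → ℕ)
    (hsp : KSpecialInf k (blowup (k+1) S)) :
    NonrepEdgeColoring (kTree k) (derivedColoring k (flat k S)) := by
  intro u v p hp hrep
  obtain ⟨wl, hwne, hconc⟩ := hrep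
  have hr : 1 ≤ wl.length := List.length_pos_iff.mpr hwne
  set I := p.darts.map gIdx with hI
  have hcol : I.map (flat k S) = wl ++ wl := by
    rw [hI, ← walk_colors]
    exact hconc
  have hlen : I.length = 2 * wl.length := by
    have := congrArg List.length hcol
    rw [List.length_map, List.length_append] at this
    omega
  have hL0 : 0 < p.darts.length := by
    rw [hI, List.length_map] at hlen
    omega
  obtain ⟨t0, ht0, hshape⟩ := shape_exists p hp hL0
  rw [← hI] at ht0 hshape
  rcases shape_main hshape (by omega) ht0 with ⟨m, hgs⟩ | ⟨m, hgs⟩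
  · exact finish_bad hk hr hlen hgs hcol (posJ p) hsp
  · refine finish_bad (J := I.reverse) (wl := wl.reverse) hk (by rw [List.length_reverse]; exact hr)
      (by rw [List.length_reverse, List.length_reverse]; exact hlen) hgs ?_ ?_ hsp
    · rw [List.map_reverse, hcol, List.reverse_append]
    · intro t ht
      rw [List.length_reverse] at ht
      rw [List.getD_eq_getElem _ _ (by rw [List.length_reverse]; exact ht), List.getElem_reverse]
      have h2 : I.length - 1 - t < I.length := by omega
      rw [← List.getD_eq_getElem _ 0 h2]
      exact posJ p _ h2

lemma flat_lt (hk : 1 ≤ k) (S : ℕ → ℕ) (hS3 : ∀ i, 1 ≤ i → S i < 3) (p : ℕ) :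
    flat k S p < 3 * k + 3 := by
  unfold flat
  have h1 : (p-1) % (k+1) < k + 1 := Nat.mod_lt _ (Nat.succ_pos k)
  have h2 : S ((p-1)/(k+1) + 1) < 3 := hS3 _ (Nat.le_add_left 1 _)
  set s := S ((p-1)/(k+1) + 1) with hs
  interval_cases s <;> omega

theorem thue_bound (hk : 1 ≤ k) (S : ℕ → ℕ) (hS3 : ∀ i, 1 ≤ i → S i < 3)
    (hsp : KSpecialInf k (blowup (k+1) S)) : thueIdx (kTree k) ≤ 3 * k + 3 := by
  apply Nat.sInf_le
  refine ⟨derivedColoring k (flat k S), ?_, derived_nonrep hk S hsp⟩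
  intro e he
  induction e using Sym2.ind with
  | _ a b =>
    rw [SimpleGraph.mem_edgeSet] at he
    rcases adj_cases he with ⟨j, hj⟩ | ⟨j, hj⟩
    · have hlen : b.length < a.length := by rw [hj]; simp
      unfold derivedColoring
      rw [Sym2.lift_mk]
      simp only [hlen, if_pos]
      exact flat_lt hk S hS3 _
    · have hlen : a.length < b.length := by rw [hj]; simp
      unfold derivedColoring
      rw [Sym2.lift_mk]
      simp only [if_neg (by omega : ¬ b.length < a.length), hlen, if_pos]
      exact flat_lt hk S hS3 _

end Top


/-- For every `k ≥ 1`, if `S` is an infinite square-free sequence over 3 symbols, then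
`S⁺ = S^{(k+1)}` over `3(k+1)` symbols is `k`-special; consequently `π'(T_k) ≤ 3k + 3`. -/
theorem stmt15 (k : ℕ) (hk : 1 ≤ k) :
    (∀ S : ℕ → ℕ, (∀ i, 1 ≤ i → S i < 3) → SeqSquareFree S →
      KSpecialInf k (blowup (k + 1) S)) ∧
    thueIdx (kTree k) ≤ 3 * k + 3 := by
  constructor
  · intro S _ hSF
    exact blowup_kspecial k hk S hSF
  · have hsf : SeqSquareFree terSeq := terSeq_sf
    have hsp := blowup_kspecial k hk terSeq hsf
    exact thue_bound hk terSeq (fun i _ => terSeq_lt3 i) hsp
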